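/- Let A be a commutative ring, let T be an m × n matrix with entries in A, let d be a natural number, and let 𝔭 be a prime ideal of A. Then the rank over κ(𝔭) of the matrix obtained from T by applying the canonical map A → κ(𝔭) entrywise is at most d if and only if the determinant of every (d+1) × (d+1) submatrix of T lies in 𝔭. Consequently, the set { 𝔭 ∈ Spec A : rank of T over κ(𝔭) ≤ d } is the Zariski-closed zero set of the ideal generated by all (d+1) × (d+1) minors of T. -/

import Mathlib

open Module Submodule Matrix

/-- From a family whose span has finrank at least `k`, one can pick `k` indices giving a
linearly independent subfamily. -/
lemma exists_inj_li {K V ι : Type*} [Field K] [AddCommGroup V] [Module K V] [Fintype ι]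
    (v : ι → V) (k : ℕ)
    (hk : k ≤ Module.finrank K (Submodule.span K (Set.range v))) :
    ∃ g : Fin k → ι, Function.Injective g ∧ LinearIndependent K (v ∘ g) := by
  classical
  obtain ⟨b, hbs, hspan, hli⟩ := exists_linearIndependent K (Set.range v)
  have hbfin : b.Finite := (Set.finite_range v).subset hbs
  haveI := hbfin.fintype
  have hcard : Module.finrank K (Submodule.span K (Set.range v)) = Fintype.card b := by
    rw [← hspan, finrank_span_set_eq_card hli, Set.toFinset_card]
  have hk' : Fintype.card (Fin k) ≤ Fintype.card b := by
    rw [Fintype.card_fin]; omega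
  obtain ⟨e⟩ := Function.Embedding.nonempty_of_card_le hk'
  choose idx hidx using fun x : b => hbs x.2
  refine ⟨fun j => idx (e j), ?_, ?_⟩
  · intro i j hij
    have hvv : (e i : V) = (e j : V) := by
      rw [← hidx (e i), ← hidx (e j)]; exact congrArg v hij
    exact e.injective (Subtype.ext hvv)
  · have : (v ∘ fun j => idx (e j)) = (fun x : b => (x : V)) ∘ e := by
      funext j; exact hidx (e j)
    rw [this]
    exact hli.comp e e.injective

/-- Any submatrix has rank at most the rank of the original matrix. -/
lemma rank_submatrix_le' {K : Type*} [Field K] {m n k l : ℕ}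
    (M : Matrix (Fin m) (Fin n) K) (f : Fin k → Fin m) (g : Fin l → Fin n) :
    (M.submatrix f g).rank ≤ M.rank := by
  classical
  have h : M.submatrix f g =
      ((1 : Matrix (Fin m) (Fin m) K).submatrix f id) * M *
      ((1 : Matrix (Fin n) (Fin n) K).submatrix id g) := by
    ext i j
    simp [Matrix.mul_apply, Matrix.one_apply, ite_mul, mul_ite]
  rw [h]
  exact le_trans (Matrix.rank_mul_le_left _ _)
    (by simpa using Matrix.rank_mul_le_right ((1 : Matrix (Fin m) (Fin m) K).submatrix f id) M)

/-- Over a field, a matrix has rank at most `d` iff all `(d+1) × (d+1)` minors vanish. -/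
lemma rank_le_iff_det_submatrix {K : Type*} [Field K] {m n : ℕ}
    (M : Matrix (Fin m) (Fin n) K) (d : ℕ) :
    M.rank ≤ d ↔ ∀ (f : Fin (d+1) → Fin m) (g : Fin (d+1) → Fin n),
      Function.Injective f → Function.Injective g → (M.submatrix f g).det = 0 := by
  classical
  constructor
  · intro h f g hf hg
    by_contra hdet
    have hunit : IsUnit (M.submatrix f g) :=
      (Matrix.isUnit_iff_isUnit_det _).2 (isUnit_iff_ne_zero.2 hdet)
    have h1 := Matrix.rank_of_isUnit _ hunit
    have hle := rank_submatrix_le' M f g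
    rw [h1] at hle
    simp [Fintype.card_fin] at hle
    omega
  · contrapose!
    intro h
    have hrank : d + 1 ≤ M.rank := by omega
    have h1 : d + 1 ≤ finrank K (span K (Set.range Mᵀ)) := by
      show d + 1 ≤ finrank K (span K (Set.range M.col))
      rw [← Matrix.rank_eq_finrank_span_cols]; omega
    obtain ⟨g, hg, hgli⟩ := exists_inj_li Mᵀ (d+1) h1
    set N := M.submatrix (id : Fin m → Fin m) g with hN
    have hNT : LinearIndependent K Nᵀ := hgli
    have hNrank : N.rank = d + 1 := by
      have := LinearIndependent.rank_matrix (M := Nᵀ) hNT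
      rwa [Matrix.rank_transpose, Fintype.card_fin] at this
    have h2 : d + 1 ≤ finrank K (span K (Set.range N)) := by
      show d + 1 ≤ finrank K (span K (Set.range N.row))
      rw [← Matrix.rank_eq_finrank_span_row, hNrank]
    obtain ⟨f, hf, hfli⟩ := exists_inj_li N (d+1) h2
    have hrows : LinearIndependent K (M.submatrix f g) := hfli
    have hu := (Matrix.linearIndependent_rows_iff_isUnit).1 hrows
    exact ⟨f, g, hf, hg, ((Matrix.isUnit_iff_isUnit_det _).1 hu).ne_zero⟩

/-- The residue field `κ(P)` of a prime `P` in `Spec A`: the residue field of the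
localization of `A` at `P` (canonically the field of fractions of `A/P`). -/
abbrev PrimeSpectrum.residueFieldAt {A : Type*} [CommRing A] (P : PrimeSpectrum A) :
    Type _ :=
  IsLocalRing.ResidueField (Localization.AtPrime P.asIdeal)

/-- For an `m × n` matrix `T` over a commutative ring `A`, a prime `P` of `A`, and `d : ℕ`:
the rank of `T` over the residue field `κ(P)` is at most `d` if and only if every
`(d+1) × (d+1)` minor of `T` lies in `P`.  Consequently, the set of primes at which the
rank of `T` is at most `d` is the Zariski-closed zero set of the ideal generated by all
`(d+1) × (d+1)` minors of `T`. -/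
theorem rank_le_iff_minors_mem (A : Type*) [CommRing A] (m n : ℕ)
    (T : Matrix (Fin m) (Fin n) A) (d : ℕ) :
    (∀ P : PrimeSpectrum A,
        (T.map (algebraMap A P.residueFieldAt)).rank ≤ d ↔
          ∀ (f : Fin (d + 1) → Fin m) (g : Fin (d + 1) → Fin n),
            Function.Injective f → Function.Injective g →
              (T.submatrix f g).det ∈ P.asIdeal)
      ∧ {P : PrimeSpectrum A | (T.map (algebraMap A P.residueFieldAt)).rank ≤ d}
          = PrimeSpectrum.zeroLocus
              ((Ideal.span {x : A | ∃ (f : Fin (d + 1) → Fin m) (g : Fin (d + 1) → Fin n),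
                Function.Injective f ∧ Function.Injective g ∧
                  x = (T.submatrix f g).det} : Ideal A) : Set A)
      ∧ IsClosed {P : PrimeSpectrum A |
          (T.map (algebraMap A P.residueFieldAt)).rank ≤ d} := by
  classical
  have key : ∀ P : PrimeSpectrum A,
      (T.map (algebraMap A P.residueFieldAt)).rank ≤ d ↔
        ∀ (f : Fin (d + 1) → Fin m) (g : Fin (d + 1) → Fin n),
          Function.Injective f → Function.Injective g →
            (T.submatrix f g).det ∈ P.asIdeal := by
    intro P
    set K := P.residueFieldAt
    have hker : ∀ x : A, algebraMap A K x = 0 ↔ x ∈ P.asIdeal := by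
      intro x
      rw [IsScalarTower.algebraMap_apply A (Localization.AtPrime P.asIdeal) K,
        IsLocalRing.ResidueField.algebraMap_eq, IsLocalRing.residue_eq_zero_iff]
      exact IsLocalization.AtPrime.to_map_mem_maximal_iff _ P.asIdeal x
    rw [rank_le_iff_det_submatrix]
    refine forall_congr' fun f => forall_congr' fun g => imp_congr_right fun hf =>
      imp_congr_right fun hg => ?_
    rw [Matrix.submatrix_map, ← RingHom.mapMatrix_apply, ← RingHom.map_det, hker]
  have hset : {P : PrimeSpectrum A | (T.map (algebraMap A P.residueFieldAt)).rank ≤ d}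
      = PrimeSpectrum.zeroLocus
          ((Ideal.span {x : A | ∃ (f : Fin (d + 1) → Fin m) (g : Fin (d + 1) → Fin n),
            Function.Injective f ∧ Function.Injective g ∧
              x = (T.submatrix f g).det} : Ideal A) : Set A) := by
    ext P
    rw [Set.mem_setOf_eq, key P, PrimeSpectrum.mem_zeroLocus]
    constructor
    · intro h
      refine (Ideal.span_le).2 ?_
      rintro x ⟨f, g, hf, hg, rfl⟩
      exact h f g hf hg
    · intro h f g hf hg
      exact h (Ideal.subset_span ⟨f, g, hf, hg, rfl⟩)
  exact ⟨key, hset, hset ▸ PrimeSpectrum.isClosed_zeroLocus _⟩
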